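/- Let C(y,z) be a Boolean combination of linear inequalities with rational coefficients in variables (y,z) ∈ R^k × R, such that fixing y (and auxiliary real parameters) each conjunctive clause defines a closed interval in z. If for some y ∈ R^k the union of finitely many intervals S_1(y),…,S_s(y) ⊆ R (each a closed interval, possibly empty, a half-line, or R) covers Z, then either some S_j(y) = R, or there exist indices j_1,…,j_{n+1} with n < s and integers v_1 < v_2 < … < v_n such that S_{j_1}(y) is unbounded below with maximal integer v_1, each S_{j_i}(y) (2 ≤ i ≤ n) contains v_{i-1}+1 and has maximal integer v_i, and S_{j_{n+1}}(y) is unbounded above and contains v_n + 1. -/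

import Mathlib

private lemma mem_of_between (S : Set ℝ) (h : Convex ℝ S) {a b x : ℝ}
    (ha : a ∈ S) (hb : b ∈ S) (hax : a ≤ x) (hxb : x ≤ b) : x ∈ S :=
  h.ordConnected.out ha hb ⟨hax, hxb⟩

private lemma bddAbove_of_max (S : Set ℝ) (h : Convex ℝ S) (v : ℤ) (hv : (v : ℝ) ∈ S)
    (hmax : ∀ m : ℤ, (m : ℝ) ∈ S → m ≤ v) : BddAbove S := by
  refine ⟨(v : ℝ) + 1, fun x hx => ?_⟩
  by_contra hlt
  push_neg at hlt
  have hmem : ((v + 1 : ℤ) : ℝ) ∈ S :=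
    mem_of_between S h hv hx (by push_cast; linarith) (by push_cast; linarith)
  have := hmax (v + 1) hmem
  omega

private lemma chain_aux (s : ℕ) (S : Fin s → Set ℝ)
    (hconv : ∀ j, Convex ℝ (S j)) (hclosed : ∀ j, IsClosed (S j))
    (hcover : ∀ n : ℤ, ∃ j, (n : ℝ) ∈ S j) :
    ∀ N : ℕ, ∀ F : Finset (Fin s), F.card ≤ N → ∀ t : ℤ,
      (∀ j, (∃ m : ℤ, t ≤ m ∧ (m : ℝ) ∈ S j) → j ∈ F) →
      ∃ (n : ℕ) (j : Fin (n + 1) → Fin s) (v : Fin n → ℤ),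
        StrictMono v ∧ (t : ℝ) ∈ S (j 0) ∧ (∀ i, t ≤ v i) ∧
        ¬ BddAbove (S (j (Fin.last n))) ∧
        (∀ i : Fin n, (v i : ℝ) ∈ S (j i.castSucc) ∧
          ∀ m : ℤ, (m : ℝ) ∈ S (j i.castSucc) → m ≤ v i) ∧
        (∀ i : Fin n, ((v i + 1 : ℤ) : ℝ) ∈ S (j i.succ)) := by
  intro N
  induction N with
  | zero =>
    intro F hcard t hF
    exfalso
    obtain ⟨j₀, hj₀⟩ := hcover t
    have : j₀ ∈ F := hF j₀ ⟨t, le_refl t, hj₀⟩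
    have := Finset.card_pos.2 ⟨j₀, this⟩
    omega
  | succ N ih =>
    intro F hcard t hF
    obtain ⟨j₀, hj₀⟩ := hcover t
    have hj₀F : j₀ ∈ F := hF j₀ ⟨t, le_refl t, hj₀⟩
    by_cases hA : BddAbove (S j₀)
    · have hne : (S j₀).Nonempty := ⟨t, hj₀⟩
      have hbmem : sSup (S j₀) ∈ S j₀ := (hclosed j₀).csSup_mem hne hA
      set v₀ := ⌊sSup (S j₀)⌋ with hv₀def
      have htv : t ≤ v₀ := Int.le_floor.2 (le_csSup hA hj₀)
      have hv₀mem : (v₀ : ℝ) ∈ S j₀ :=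
        mem_of_between _ (hconv j₀) hj₀ hbmem (by exact_mod_cast htv) (Int.floor_le _)
      have hmax : ∀ m : ℤ, (m : ℝ) ∈ S j₀ → m ≤ v₀ :=
        fun m hm => Int.le_floor.2 (le_csSup hA hm)
      have hcard' : (F.erase j₀).card ≤ N := by
        rw [Finset.card_erase_of_mem hj₀F]
        have := Finset.card_pos.2 ⟨j₀, hj₀F⟩
        omega
      have hF' : ∀ j', (∃ m : ℤ, v₀ + 1 ≤ m ∧ (m : ℝ) ∈ S j') → j' ∈ F.erase j₀ := by
        intro j' ⟨m, hm1, hm2⟩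
        refine Finset.mem_erase.2 ⟨?_, hF j' ⟨m, by omega, hm2⟩⟩
        rintro rfl
        have := hmax m hm2
        omega
      obtain ⟨n', j', v', hsm, hmem0, hge, hlast, hmax', hsucc'⟩ :=
        ih (F.erase j₀) hcard' (v₀ + 1) hF'
      refine ⟨n' + 1, Fin.cons j₀ j', Fin.cons v₀ v', ?_, ?_, ?_, ?_, ?_, ?_⟩
      · intro a b hab
        induction b using Fin.cases with
        | zero => exact absurd hab (Fin.not_lt_zero a)
        | succ b' =>
          induction a using Fin.cases with
          | zero =>
            simp only [Fin.cons_zero, Fin.cons_succ]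
            have := hge b'
            omega
          | succ a' =>
            simp only [Fin.cons_succ]
            exact hsm (Fin.succ_lt_succ_iff.mp hab)
      · simpa using hj₀
      · intro i
        induction i using Fin.cases with
        | zero => simpa using htv
        | succ i' =>
          have := hge i'
          simp only [Fin.cons_succ]
          omega
      · rw [← Fin.succ_last, Fin.cons_succ]
        exact hlast
      · intro i
        induction i using Fin.cases with
        | zero =>
          simp only [Fin.castSucc_zero, Fin.cons_zero]
          exact ⟨hv₀mem, hmax⟩
        | succ i' =>
          rw [← Fin.succ_castSucc, Fin.cons_succ, Fin.cons_succ]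
          exact hmax' i'
      · intro i
        induction i using Fin.cases with
        | zero =>
          simp only [Fin.cons_zero, Fin.succ_zero_eq_one]
          have : (1 : Fin (n' + 2)) = (0 : Fin (n' + 1)).succ := rfl
          rw [this, Fin.cons_succ]
          exact hmem0
        | succ i' =>
          simp only [Fin.cons_succ]
          exact hsucc' i'
    · exact ⟨0, fun _ => j₀, Fin.elim0, fun a b h => absurd h (by omega),
        hj₀, fun i => i.elim0, hA, fun i => i.elim0, fun i => i.elim0⟩

/-- Combinatorial core of quantifier elimination for `∃ y ∈ ℝ^k ∀ z ∈ ℤ : C(y,z)`: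
if a finite family `S₁, …, Sₛ` of closed convex subsets of `ℝ` (i.e. closed intervals,
possibly empty, half-lines, or all of `ℝ`) covers `ℤ`, then either some `Sⱼ = ℝ`, or
there is a chain: an interval `S_{j₁}` unbounded below with maximal integer `v₁`, then
intervals `S_{jᵢ}` containing `v_{i−1}+1` with maximal integer `vᵢ`, ending with an
interval `S_{j_{n+1}}` unbounded above containing `vₙ+1`. -/
theorem intervals_cover_int_chain (s : ℕ) (S : Fin s → Set ℝ)
    (hconv : ∀ j, Convex ℝ (S j)) (hclosed : ∀ j, IsClosed (S j))
    (hcover : ∀ n : ℤ, ∃ j, (n : ℝ) ∈ S j) :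
    (∃ j, S j = Set.univ) ∨
    ∃ n : ℕ, 1 ≤ n ∧ n < s ∧
      ∃ (j : Fin (n + 1) → Fin s) (v : Fin n → ℤ),
        StrictMono v ∧
        ¬ BddBelow (S (j 0)) ∧
        ¬ BddAbove (S (j (Fin.last n))) ∧
        (∀ i : Fin n, (v i : ℝ) ∈ S (j i.castSucc) ∧
          ∀ m : ℤ, (m : ℝ) ∈ S (j i.castSucc) → m ≤ v i) ∧
        ∀ i : Fin n, ((v i + 1 : ℤ) : ℝ) ∈ S (j i.succ) := by
  by_cases huniv : ∃ j, S j = Set.univ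
  · exact Or.inl huniv
  right
  push_neg at huniv
  -- find a set unbounded below
  have hsne : Nonempty (Fin s) := ⟨(hcover 0).choose⟩
  have hbelow : ∃ j, ¬ BddBelow (S j) := by
    by_contra h
    push_neg at h
    set b : Fin s → ℝ := fun j => (h j).choose with hbdef
    have hb : ∀ j, ∀ x ∈ S j, b j ≤ x := fun j x hx => (h j).choose_spec hx
    set B := Finset.univ.inf' (Finset.univ_nonempty) b with hBdef
    obtain ⟨j, hj⟩ := hcover (⌊B⌋ - 1)
    have h1 : b j ≤ (⌊B⌋ - 1 : ℤ) := hb j _ hj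
    have h2 : B ≤ b j := Finset.inf'_le b (Finset.mem_univ j)
    have h3 : (⌊B⌋ : ℝ) ≤ B := Int.floor_le B
    push_cast at h1
    linarith
  obtain ⟨jlo, hjlo⟩ := hbelow
  have hA : BddAbove (S jlo) := by
    by_contra hA
    apply huniv jlo
    rw [not_bddBelow_iff] at hjlo
    rw [not_bddAbove_iff] at hA
    ext x
    simp only [Set.mem_univ, iff_true]
    obtain ⟨a, ha, hax⟩ := hjlo x
    obtain ⟨c, hc, hxc⟩ := hA x
    exact mem_of_between _ (hconv jlo) ha hc hax.le hxc.le
  have hne : (S jlo).Nonempty := by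
    rw [not_bddBelow_iff] at hjlo
    obtain ⟨a, ha, _⟩ := hjlo 0
    exact ⟨a, ha⟩
  have hbmem : sSup (S jlo) ∈ S jlo := (hclosed jlo).csSup_mem hne hA
  set vlo := ⌊sSup (S jlo)⌋ with hvlodef
  have hvlomem : (vlo : ℝ) ∈ S jlo := by
    have hjlo' := not_bddBelow_iff.mp hjlo
    obtain ⟨a, ha, hax⟩ := hjlo' (vlo : ℝ)
    exact mem_of_between _ (hconv jlo) ha hbmem hax.le (Int.floor_le _)
  have hmaxlo : ∀ m : ℤ, (m : ℝ) ∈ S jlo → m ≤ vlo :=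
    fun m hm => Int.le_floor.2 (le_csSup hA hm)
  obtain ⟨n', j', v', hsm, hmem0, hge, hlast, hmax', hsucc'⟩ :=
    chain_aux s S hconv hclosed hcover s Finset.univ (by simp) (vlo + 1)
      (fun j _ => Finset.mem_univ j)
  refine ⟨n' + 1, le_add_self, ?_, Fin.cons jlo j', Fin.cons vlo v', ?_, ?_, ?_, ?_, ?_⟩
  · -- n' + 1 < s via injectivity of the chain map
    set J : Fin (n' + 2) → Fin s := Fin.cons jlo j' with hJdef
    set V : Fin (n' + 1) → ℤ := Fin.cons vlo v' with hVdef
    have hVsm : StrictMono V := by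
      intro a b hab
      induction b using Fin.cases with
      | zero => exact absurd hab (Fin.not_lt_zero a)
      | succ b' =>
        induction a using Fin.cases with
        | zero =>
          simp only [hVdef, Fin.cons_zero, Fin.cons_succ]
          have := hge b'
          omega
        | succ a' =>
          simp only [hVdef, Fin.cons_succ]
          exact hsm (Fin.succ_lt_succ_iff.mp hab)
    have hVmem : ∀ i : Fin (n' + 1), (V i : ℝ) ∈ S (J i.castSucc) ∧
        ∀ m : ℤ, (m : ℝ) ∈ S (J i.castSucc) → m ≤ V i := by
      intro i
      induction i using Fin.cases with
      | zero =>
        simp only [hJdef, hVdef, Fin.castSucc_zero, Fin.cons_zero]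
        exact ⟨hvlomem, hmaxlo⟩
      | succ i' =>
        simp only [hJdef, hVdef, ← Fin.succ_castSucc, Fin.cons_succ]
        exact hmax' i'
    have hJlast : ¬ BddAbove (S (J (Fin.last (n' + 1)))) := by
      simp only [hJdef, ← Fin.succ_last, Fin.cons_succ]
      exact hlast
    have hJbdd : ∀ i : Fin (n' + 1), BddAbove (S (J i.castSucc)) := fun i =>
      bddAbove_of_max _ (hconv _) (V i) (hVmem i).1 (hVmem i).2
    have hlt : ∀ a b : Fin (n' + 2), a < b → J a ≠ J b := by
      intro a b hab hJab
      rcases Fin.eq_castSucc_or_eq_last b with ⟨b', rfl⟩ | rfl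
      · rcases Fin.eq_castSucc_or_eq_last a with ⟨a', rfl⟩ | rfl
        · have hab' : a' < b' := by
            simpa [Fin.castSucc_lt_castSucc_iff] using hab
          have h1 : V a' < V b' := hVsm hab'
          have h2 : V b' ≤ V a' := (hVmem a').2 (V b') (hJab ▸ (hVmem b').1)
          omega
        · exact absurd hab (Fin.castSucc_lt_last b').asymm
      · rcases Fin.eq_castSucc_or_eq_last a with ⟨a', rfl⟩ | rfl
        · exact hJlast (hJab ▸ hJbdd a')
        · exact absurd hab (lt_irrefl _)
    have hinj : Function.Injective J := by
      intro a b hab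
      by_contra hne'
      rcases lt_or_gt_of_ne hne' with h | h
      · exact hlt a b h hab
      · exact hlt b a h hab.symm
    have := Fintype.card_le_of_injective J hinj
    simp at this
    omega
  · intro a b hab
    induction b using Fin.cases with
    | zero => exact absurd hab (Fin.not_lt_zero a)
    | succ b' =>
      induction a using Fin.cases with
      | zero =>
        simp only [Fin.cons_zero, Fin.cons_succ]
        have := hge b'
        omega
      | succ a' =>
        simp only [Fin.cons_succ]
        exact hsm (Fin.succ_lt_succ_iff.mp hab)
  · simpa using hjlo
  · rw [← Fin.succ_last, Fin.cons_succ]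
    exact hlast
  · intro i
    induction i using Fin.cases with
    | zero =>
      simp only [Fin.castSucc_zero, Fin.cons_zero]
      exact ⟨hvlomem, hmaxlo⟩
    | succ i' =>
      rw [← Fin.succ_castSucc, Fin.cons_succ, Fin.cons_succ]
      exact hmax' i'
  · intro i
    induction i using Fin.cases with
    | zero =>
      simp only [Fin.cons_zero, Fin.succ_zero_eq_one]
      have : (1 : Fin (n' + 2)) = (0 : Fin (n' + 1)).succ := rfl
      rw [this, Fin.cons_succ]
      exact hmem0
    | succ i' =>
      simp only [Fin.cons_succ]
      exact hsucc' i'
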